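/- Let 1 < α ≤ 2, let M ≥ 2 be an integer, let h > 0, and let C be the (M−1)×(M−1) Toeplitz matrix with entries C_{ij} = c_{i−j}^(α). Suppose U, V, W : ℝ → ℝ^{M−1} are differentiable functions satisfying, for every t and every component j (1 ≤ j ≤ M−1): U_j'(t) = V_j(t); V_j'(t) = −(h^{−α} C U(t))_j − B(U_j(t)) W_j(t); W_j'(t) = (1/2) B(U_j(t)) V_j(t), where B(x) = sin(x)/√(2 − cos(x)). Then the semi-discrete energy Ẽ(t) = (1/2)( ‖V(t)‖² + h^{−α} (U(t))ᵀ C U(t) · h + 2 ‖W(t)‖² ), with ‖u‖² = h ∑_{j=1}^{M−1} u_j², is constant in t: Ẽ(t) = Ẽ(0) for all t. -/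

import Mathlib

/-- The fractional centered difference coefficients
`c_k^(α) = (−1)^k Γ(α+1) / (Γ(α/2 − k + 1) Γ(α/2 + k + 1))`,
interpreted as `0` when one of the Gamma arguments is a nonpositive integer. -/
noncomputable def fracCoeff (α : ℝ) (k : ℤ) : ℝ :=
  (-1 : ℝ) ^ k * Real.Gamma (α + 1) /
    (Real.Gamma (α / 2 - k + 1) * Real.Gamma (α / 2 + k + 1))

/-- `B(x) = sin x / √(2 − cos x)`. -/
noncomputable def Bfun (x : ℝ) : ℝ := Real.sin x / Real.sqrt (2 - Real.cos x)

lemma fracCoeff_symm (α : ℝ) (k : ℤ) : fracCoeff α (-k) = fracCoeff α k := by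
  unfold fracCoeff
  push_cast
  rw [show α / 2 - (-(k:ℝ)) + 1 = α / 2 + k + 1 by ring,
      show α / 2 + (-(k:ℝ)) + 1 = α / 2 - k + 1 by ring]
  rw [zpow_neg, ← inv_zpow, inv_neg, inv_one]
  ring

theorem stmt6 (α : ℝ) (hα1 : 1 < α) (hα2 : α ≤ 2) (M : ℕ) (hM : 2 ≤ M)
    (h : ℝ) (hh : 0 < h)
    (Cm : Matrix (Fin (M - 1)) (Fin (M - 1)) ℝ)
    (hC : ∀ i j, Cm i j = fracCoeff α ((i : ℤ) - (j : ℤ)))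
    (U V W : ℝ → Fin (M - 1) → ℝ)
    (hU : ∀ (t : ℝ) (j : Fin (M - 1)), HasDerivAt (fun s => U s j) (V t j) t)
    (hV : ∀ (t : ℝ) (j : Fin (M - 1)), HasDerivAt (fun s => V s j)
      (-(h ^ (-α) • Cm.mulVec (U t)) j - Bfun (U t j) * W t j) t)
    (hW : ∀ (t : ℝ) (j : Fin (M - 1)), HasDerivAt (fun s => W s j)
      ((1 / 2) * Bfun (U t j) * V t j) t) :
    ∀ t : ℝ,
      (1 / 2) * ((h * ∑ j, (V t j) ^ 2) +
        h ^ (-α) * dotProduct (U t) (Cm.mulVec (U t)) * h +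
        2 * (h * ∑ j, (W t j) ^ 2)) =
      (1 / 2) * ((h * ∑ j, (V 0 j) ^ 2) +
        h ^ (-α) * dotProduct (U 0) (Cm.mulVec (U 0)) * h +
        2 * (h * ∑ j, (W 0 j) ^ 2)) := by
  have hsymm : ∀ i j, Cm i j = Cm j i := by
    intro i j
    rw [hC, hC, ← fracCoeff_symm α ((j : ℤ) - (i : ℤ))]
    congr 1; ring
  set E : ℝ → ℝ := fun t =>
    (1 / 2) * ((h * ∑ j, (V t j) ^ 2) +
      h ^ (-α) * dotProduct (U t) (Cm.mulVec (U t)) * h +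
      2 * (h * ∑ j, (W t j) ^ 2)) with hE
  have key : ∀ t : ℝ, HasDerivAt E 0 t := by
    intro t
    -- derivatives of the three pieces
    have hVsq : HasDerivAt (fun s => ∑ j, (V s j) ^ 2)
        (∑ j, 2 * V t j * (-(h ^ (-α) • Cm.mulVec (U t)) j - Bfun (U t j) * W t j)) t := by
      apply HasDerivAt.fun_sum
      intro j _
      have := ((hV t j).fun_pow 2)
      simpa [mul_comm, mul_assoc, mul_left_comm] using this
    have hWsq : HasDerivAt (fun s => ∑ j, (W s j) ^ 2)
        (∑ j, 2 * W t j * ((1 / 2) * Bfun (U t j) * V t j)) t := by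
      apply HasDerivAt.fun_sum
      intro j _
      have := ((hW t j).fun_pow 2)
      simpa [mul_comm, mul_assoc, mul_left_comm] using this
    have hQ : HasDerivAt (fun s => dotProduct (U s) (Cm.mulVec (U s)))
        (∑ i, (V t i * (∑ j, Cm i j * U t j) + U t i * (∑ j, Cm i j * V t j))) t := by
      have : (fun s => dotProduct (U s) (Cm.mulVec (U s)))
          = fun s => ∑ i, U s i * (∑ j, Cm i j * U s j) := by
        funext s
        simp [dotProduct, Matrix.mulVec]
      rw [this]
      apply HasDerivAt.fun_sum
      intro i _
      exact (hU t i).mul (HasDerivAt.fun_sum fun j _ => (hU t j).const_mul (Cm i j))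
    -- simplify the three derivative values
    set S1 : ℝ := ∑ j, V t j * (Cm.mulVec (U t)) j with hS1
    set S2 : ℝ := ∑ j, V t j * Bfun (U t j) * W t j with hS2
    have e1 : (∑ j, 2 * V t j * (-(h ^ (-α) • Cm.mulVec (U t)) j - Bfun (U t j) * W t j))
        = -2 * h ^ (-α) * S1 + (-2) * S2 := by
      rw [hS1, hS2, Finset.mul_sum, Finset.mul_sum, ← Finset.sum_add_distrib]
      apply Finset.sum_congr rfl
      intro j _
      simp only [Pi.neg_apply, Pi.smul_apply, smul_eq_mul]
      ring
    have e2 : (∑ j, 2 * W t j * ((1 / 2) * Bfun (U t j) * V t j)) = S2 := by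
      rw [hS2]
      apply Finset.sum_congr rfl
      intro j _
      ring
    have e3 : (∑ i, (V t i * (∑ j, Cm i j * U t j) + U t i * (∑ j, Cm i j * V t j)))
        = 2 * S1 := by
      rw [Finset.sum_add_distrib]
      have h1 : (∑ i, V t i * (∑ j, Cm i j * U t j)) = S1 := by
        rw [hS1]
        apply Finset.sum_congr rfl
        intro i _
        simp [Matrix.mulVec, dotProduct]
      have h2 : (∑ i, U t i * (∑ j, Cm i j * V t j)) = S1 := by
        rw [hS1]
        have : ∀ i, U t i * (∑ j, Cm i j * V t j) = ∑ j, V t j * Cm j i * U t i := by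
          intro i
          rw [Finset.mul_sum]
          apply Finset.sum_congr rfl
          intro j _
          rw [hsymm i j]; ring
        simp_rw [this]
        rw [Finset.sum_comm]
        apply Finset.sum_congr rfl
        intro j _
        simp [Matrix.mulVec, dotProduct, Finset.mul_sum]
        apply Finset.sum_congr rfl
        intro i _
        ring
      rw [h1, h2]; ring
    set A1 : ℝ := ∑ j, 2 * V t j * (-(h ^ (-α) • Cm.mulVec (U t)) j
            - Bfun (U t j) * W t j) with hA1
    set A2 : ℝ := ∑ i, (V t i * (∑ j, Cm i j * U t j)
            + U t i * (∑ j, Cm i j * V t j)) with hA2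
    set A3 : ℝ := ∑ j, 2 * W t j * ((1 / 2) * Bfun (U t j) * V t j) with hA3
    have hD0 : HasDerivAt E
        ((1 / 2) * (h * A1 + h ^ (-α) * A2 * h + 2 * (h * A3))) t := by
      rw [hE]
      exact (((hVsq.const_mul h).add
        ((hQ.const_mul (h ^ (-α))).mul_const h)).add
        ((hWsq.const_mul h).const_mul 2)).const_mul (1 / 2)
    convert hD0 using 1
    rw [e1, e2, e3]
    ring
  have hdiff : Differentiable ℝ E := fun t => (key t).differentiableAt
  have hderiv : ∀ t, deriv E t = 0 := fun t => (key t).deriv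
  intro t
  exact is_const_of_deriv_eq_zero hdiff hderiv t 0
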